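/- Let α ≥ 1 be a natural number and 0 < ω < ω* with ω* = 1/(α+1). Then the explicit profile φ(x) = (1 + (ω*/ω − 1)·cosh²(α√ω·x))^{-1/(2α)} solves the one-dimensional stationary quasi-linear Schrödinger equation −ωφ = −(φ'/(1−φ^{2α}))' + α·φ^{2α−1}·(φ')²/(1−φ^{2α})² − φ^{2α+1} on ℝ. -/

import Mathlib

open Real

set_option maxHeartbeats 1000000 in
lemma key_alg (αr ω b p c v w : ℝ) (hω : 0 < ω) (hαpos : 0 < αr)
    (hbpos : 0 < b) (hc : 1 ≤ c)
    (hw : w = 1 + b * c ^ 2) (hv : 0 < v)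
    (hp : p = -(1 / (2 * αr)))
    (hb : b = 1 / (αr + 1) / ω - 1) :
    -ω * v =
      -(((p * (p * (v / w) * (4 * (αr ^ 2 * ω) * b ^ 2 * c ^ 2 * (c ^ 2 - 1)))
            + p * v * (2 * (αr ^ 2 * ω) * b * (2 * c ^ 2 - 1))) * (w - 1)
          - p * v * (4 * (αr ^ 2 * ω) * b ^ 2 * c ^ 2 * (c ^ 2 - 1))) / (w - 1) ^ 2)
        + αr * (w * v)⁻¹ * (p ^ 2 * (v / w) ^ 2 * (4 * (αr ^ 2 * ω) * b ^ 2 * c ^ 2 * (c ^ 2 - 1)))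
            / ((w - 1) / w) ^ 2
        - v / w := by
  have hcpos : (0:ℝ) < c := lt_of_lt_of_le one_pos hc
  have hαne : αr ≠ 0 := hαpos.ne'
  have hα1 : αr + 1 ≠ 0 := by positivity
  have hwpos : 0 < w := by nlinarith [mul_pos hbpos (pow_pos hcpos 2)]
  have hw1' : 0 < w - 1 := by nlinarith [mul_pos hbpos (pow_pos hcpos 2)]
  have hw1 : w - 1 ≠ 0 := hw1'.ne'
  have hbrel : (αr + 1) * ω * (1 + b) = 1 := by rw [hb]; field_simp; ring
  subst hw hp
  have h1b : (1 + b) ≠ 0 := by positivity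
  have hωe : ω = 1 / ((αr + 1) * (1 + b)) := by field_simp; linarith
  subst hωe
  field_simp
  ring

theorem stmt2 (α : ℕ) (hα : 1 ≤ α) (ω : ℝ) (hω : 0 < ω) (hωs : ω < 1 / ((α : ℝ) + 1))
    (φ : ℝ → ℝ)
    (hφ : ∀ x : ℝ, φ x =
      (1 + ((1 / ((α : ℝ) + 1)) / ω - 1) * Real.cosh ((α : ℝ) * Real.sqrt ω * x) ^ 2)
        ^ (-(1 / (2 * (α : ℝ))))) :
    ∀ x : ℝ,
      -ω * φ x =
        -(deriv (fun y => deriv φ y / (1 - φ y ^ (2 * α))) x)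
          + (α : ℝ) * φ x ^ (2 * α - 1) * (deriv φ x) ^ 2 / (1 - φ x ^ (2 * α)) ^ 2
          - φ x ^ (2 * α + 1) := by
  have hαr : (1:ℝ) ≤ (α:ℝ) := by exact_mod_cast hα
  have hαpos : (0:ℝ) < (α:ℝ) := lt_of_lt_of_le one_pos hαr
  intro x
  set αr := ((α:ℕ):ℝ) with hαrdef
  set b := 1 / (αr + 1) / ω - 1 with hbdef
  set a := αr * Real.sqrt ω with hadef
  set p := -(1 / (2 * αr)) with hpdef
  have hαne : αr ≠ 0 := ne_of_gt hαpos
  have hα1pos : (0:ℝ) < αr + 1 := by linarith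
  have ha2 : a ^ 2 = αr ^ 2 * ω := by
    rw [hadef, mul_pow, Real.sq_sqrt hω.le]
  have hbpos : 0 < b := by
    rw [hbdef, div_div, sub_pos, lt_div_iff₀ (by positivity)]
    have := (lt_div_iff₀ hα1pos).mp hωs
    linarith
  set u : ℝ → ℝ := fun y => 1 + b * Real.cosh (a * y) ^ 2 with hudef
  have hcosh1 : ∀ y : ℝ, 1 ≤ Real.cosh (a * y) := fun y => Real.one_le_cosh _
  have hu1 : ∀ y : ℝ, 1 < u y := by
    intro y
    have h := hcosh1 y
    simp only [hudef]
    nlinarith [mul_pos hbpos (show (0:ℝ) < Real.cosh (a*y)^2 by positivity)]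
  have hu0 : ∀ y : ℝ, 0 < u y := fun y => lt_trans one_pos (hu1 y)
  have hune : ∀ y : ℝ, u y ≠ 0 := fun y => (hu0 y).ne'
  have hu1ne : ∀ y : ℝ, u y - 1 ≠ 0 := fun y => sub_ne_zero.mpr (hu1 y).ne'
  have hφu : ∀ y : ℝ, φ y = u y ^ p := by
    intro y
    rw [hφ y]
  have hud : ∀ y : ℝ, HasDerivAt u (2 * a * b * Real.cosh (a*y) * Real.sinh (a*y)) y := by
    intro y
    have h1 : HasDerivAt (fun z : ℝ => a * z) a y := by
      simpa using (hasDerivAt_id y).const_mul a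
    have h2 : HasDerivAt (fun z : ℝ => Real.cosh (a * z)) (Real.sinh (a*y) * a) y :=
      (Real.hasDerivAt_cosh (a*y)).comp y h1
    have h4 := ((h2.pow 2).const_mul b).const_add 1
    refine h4.congr_deriv ?_
    push_cast
    ring
  have hφd : ∀ y : ℝ, HasDerivAt φ
      (p * u y ^ (p - 1) * (2*a*b*Real.cosh (a*y)*Real.sinh (a*y))) y := by
    intro y
    have h := (hud y).rpow_const (p := p) (Or.inl (hu0 y).ne')
    have h2 : HasDerivAt (fun z => u z ^ p)
        (p * u y ^ (p-1) * (2*a*b*Real.cosh (a*y)*Real.sinh (a*y))) y := by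
      convert h using 1
      ring
    exact h2.congr_of_eventuallyEq (Filter.Eventually.of_forall fun z => hφu z)
  have hdφ : ∀ y : ℝ, deriv φ y = p * u y ^ (p - 1) * (2*a*b*Real.cosh (a*y)*Real.sinh (a*y)) :=
    fun y => (hφd y).deriv
  -- cast facts
  have hc2α : ((2*α : ℕ) : ℝ) = 2*αr := by push_cast [hαrdef]; ring
  have h1le : 1 ≤ 2*α := le_trans hα (by omega)
  have hc2α1 : ((2*α - 1 : ℕ) : ℝ) = 2*αr - 1 := by
    push_cast [Nat.cast_sub h1le, hαrdef]; ring
  have hc2α2 : ((2*α + 1 : ℕ) : ℝ) = 2*αr + 1 := by push_cast [hαrdef]; ring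
  have hφpow : ∀ (y : ℝ) (n : ℕ), φ y ^ n = u y ^ (p * (n:ℝ)) := by
    intro y n
    rw [hφu y, ← Real.rpow_natCast (u y ^ p) n, ← Real.rpow_mul (hu0 y).le]
  have hφ2α : ∀ y : ℝ, φ y ^ (2*α) = (u y)⁻¹ := by
    intro y
    rw [hφpow y (2*α), hc2α, show p * (2*αr) = -1 by rw [hpdef]; field_simp]
    exact Real.rpow_neg_one _
  have hden : ∀ y : ℝ, 1 - φ y ^ (2*α) = (u y - 1) / u y := by
    intro y; rw [hφ2α y]; field_simp [hune y]
  have hg : (fun y => deriv φ y / (1 - φ y ^ (2*α)))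
      = (fun y => p * u y ^ p * (2*a*b*Real.cosh (a*y)*Real.sinh (a*y)) / (u y - 1)) := by
    funext y
    rw [hdφ y, hden y, Real.rpow_sub_one (hune y)]
    field_simp [hune y, hu1ne y]
  -- derivative of the inner quotient at x
  have hs2 : Real.sinh (a*x) ^ 2 = Real.cosh (a*x) ^ 2 - 1 := Real.sinh_sq _
  have h1x : HasDerivAt (fun z : ℝ => a * z) a x := by
    simpa using (hasDerivAt_id x).const_mul a
  have hcd : HasDerivAt (fun z : ℝ => Real.cosh (a * z)) (Real.sinh (a*x) * a) x :=
    (Real.hasDerivAt_cosh (a*x)).comp x h1x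
  have hsd : HasDerivAt (fun z : ℝ => Real.sinh (a * z)) (Real.cosh (a*x) * a) x :=
    (Real.hasDerivAt_sinh (a*x)).comp x h1x
  have hB : HasDerivAt (fun z : ℝ => 2*a*b*Real.cosh (a*z)*Real.sinh (a*z))
      (2*a^2*b*(Real.sinh (a*x)^2 + Real.cosh (a*x)^2)) x := by
    have h := (hcd.const_mul (2*a*b)).mul hsd
    refine h.congr_deriv ?_
    ring
  have hA : HasDerivAt (fun z => u z ^ p)
      (p * u x ^ (p-1) * (2*a*b*Real.cosh (a*x)*Real.sinh (a*x))) x := by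
    have h := (hud x).rpow_const (p := p) (Or.inl (hu0 x).ne')
    convert h using 1
    ring
  have hNum := (hA.const_mul p).mul hB
  have hDen : HasDerivAt (fun z => u z - 1) (2*a*b*Real.cosh (a*x)*Real.sinh (a*x)) x :=
    (hud x).sub_const 1
  have hGd := hNum.div hDen (hu1ne x)
  have hDval : deriv (fun y => p * u y ^ p * (2*a*b*Real.cosh (a*y)*Real.sinh (a*y)) / (u y - 1)) x
      = ((p * (p * (u x ^ p / u x) * (4 * (αr ^ 2 * ω) * b ^ 2 * Real.cosh (a*x) ^ 2 * (Real.cosh (a*x) ^ 2 - 1)))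
            + p * (u x ^ p) * (2 * (αr ^ 2 * ω) * b * (2 * Real.cosh (a*x) ^ 2 - 1))) * (u x - 1)
          - p * (u x ^ p) * (4 * (αr ^ 2 * ω) * b ^ 2 * Real.cosh (a*x) ^ 2 * (Real.cosh (a*x) ^ 2 - 1))) / (u x - 1) ^ 2 := by
    rw [show deriv (fun y => p * u y ^ p * (2*a*b*Real.cosh (a*y)*Real.sinh (a*y)) / (u y - 1)) x = _ from hGd.deriv, Real.rpow_sub_one (hune x)]
    simp only [Pi.mul_apply]
    linear_combination
      ((((u x - 1) * (p*p*(u x ^ p / u x)*4*b^2*Real.cosh (a*x)^2*a^2 + p*(u x ^ p)*2*b*a^2)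
          - p*(u x ^ p)*4*b^2*Real.cosh (a*x)^2*a^2) / (u x - 1)^2) * hs2)
      + ((((u x - 1) * (p*p*(u x ^ p / u x)*4*b^2*Real.cosh (a*x)^2*(Real.cosh (a*x)^2-1)
            + p*(u x ^ p)*2*b*(2*Real.cosh (a*x)^2-1))
          - p*(u x ^ p)*4*b^2*Real.cosh (a*x)^2*(Real.cosh (a*x)^2-1)) / (u x - 1)^2) * ha2)
  have hP1 : u x ^ (p * (2*αr - 1)) = (u x * u x ^ p)⁻¹ := by
    rw [show p * (2*αr - 1) = -(1 + p) by rw [hpdef]; field_simp; ring,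
      Real.rpow_neg (hu0 x).le, Real.rpow_add (hu0 x), Real.rpow_one]
  have hP2 : u x ^ (p * (2*αr + 1)) = u x ^ p / u x := by
    rw [show p * (2*αr + 1) = -1 + p by rw [hpdef]; field_simp; ring,
      Real.rpow_add (hu0 x), Real.rpow_neg_one]
    ring
  have hsq : (p * (u x ^ p / u x) * (2*a*b*Real.cosh (a*x)*Real.sinh (a*x))) ^ 2
      = p ^ 2 * (u x ^ p / u x) ^ 2
          * (4 * (αr ^ 2 * ω) * b ^ 2 * Real.cosh (a*x) ^ 2 * (Real.cosh (a*x) ^ 2 - 1)) := by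
    linear_combination (p^2*(u x ^ p / u x)^2*4*b^2*Real.cosh (a*x)^2*a^2) * hs2
      + (p^2*(u x ^ p / u x)^2*4*b^2*Real.cosh (a*x)^2*(Real.cosh (a*x)^2-1)) * ha2
  rw [hg, hDval, hdφ x, Real.rpow_sub_one (hune x), hden x,
    hφpow x (2*α-1), hc2α1, hP1, hφpow x (2*α+1), hc2α2, hP2, hφu x, hsq]
  exact key_alg αr ω b p (Real.cosh (a*x)) (u x ^ p) (u x) hω hαpos hbpos (hcosh1 x)
    (by rw [hudef]) (Real.rpow_pos_of_pos (hu0 x) p) hpdef hbdef
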